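/- arXiv:2306.13784 — 2 statements merged into one kernel-verified Lean document; each statement's English description precedes it below -/
import Mathlib

section
/- Let X₁, X₂, … be i.i.d. D-valued random variables with law μ, f Lipschitz on D compact, and for each N let u_N(ω) be a minimizer over a function class V of the empirical loss E_{N,ω}(v) = (1/N)Σᵢ|v(X_i(ω)) − f(X_i(ω))|^p. Suppose the Lipschitz constant of u_N(ω) − f is bounded by L_{X(ω)}. Then for every ω and every φ ∈ V: ‖u_N(ω) − f‖_{L^p(μ)} ≤ ((1/N)Σᵢ|φ(X_i(ω)) − f(X_i(ω))|^p)^{1/p} + L_{X(ω)} · W_p(μ, μ_{N,X(ω)}), where μ_{N,X(ω)} is the empirical measure of X₁(ω),…,X_N(ω). -/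
open MeasureTheory ProbabilityTheory NNReal Filter
open scoped ENNReal Topology

/-- The set of couplings (transport plans) between two measures. -/
def couplings {E : Type*} [MeasurableSpace E] (μ ν : Measure E) : Set (Measure (E × E)) :=
  {π | π.fst = μ ∧ π.snd = ν}

/-- The `p`-Wasserstein distance, defined via the infimum of transport costs. -/
noncomputable def Wp {E : Type*} [MeasurableSpace E] [PseudoMetricSpace E]
    (p : ℝ) (μ ν : Measure E) : ℝ :=
  (sInf {c : ℝ | ∃ π ∈ couplings μ ν, c = ∫ z, dist z.1 z.2 ^ p ∂π}) ^ (1 / p)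

/-- The empirical measure of the points `x₁, …, x_N`. -/
noncomputable def empiricalMeasure {E : Type*} [MeasurableSpace E]
    (N : ℕ) (x : Fin N → E) : Measure E :=
  ((N : ℝ≥0∞))⁻¹ • ∑ i, Measure.dirac (x i)

lemma integrable_dirac'' {E : Type*} [MeasurableSpace E] [MeasurableSingletonClass E]
    {h : E → ℝ} (hm : StronglyMeasurable h) (a : E) : Integrable h (Measure.dirac a) :=
  memLp_one_iff_integrable.mp <| MemLp.of_bound hm.aestronglyMeasurable ‖h a‖ <| by
    rw [ae_dirac_eq]; exact Filter.eventually_pure.mpr le_rfl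

lemma integral_empiricalMeasure {E : Type*} [MeasurableSpace E] [MeasurableSingletonClass E]
    {N : ℕ} (x : Fin N → E) {h : E → ℝ} (hm : StronglyMeasurable h) :
    ∫ y, h y ∂(empiricalMeasure N x) = (1 / (N : ℝ)) * ∑ i, h (x i) := by
  rw [empiricalMeasure, integral_smul_measure,
    integral_finset_sum_measure (fun i _ => integrable_dirac'' hm (x i))]
  simp [ENNReal.toReal_inv, smul_eq_mul, one_div]



lemma empirical_isProb {E : Type*} [MeasurableSpace E] {N : ℕ} (hN : 0 < N) (x : Fin N → E) :
    IsProbabilityMeasure (empiricalMeasure N x) := by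
  constructor
  simp only [empiricalMeasure, Measure.smul_apply, Measure.coe_finset_sum, Finset.sum_apply,
    Measure.dirac_apply_of_mem (Set.mem_univ _), Finset.sum_const, Finset.card_univ,
    Fintype.card_fin, nsmul_eq_mul, mul_one, smul_eq_mul]
  rw [ENNReal.inv_mul_cancel (by exact_mod_cast hN.ne') (by simp)]



lemma coupling_bound {E : Type*} [MeasurableSpace E] [MetricSpace E] [BorelSpace E]
    [SecondCountableTopology E]
    {p : ℝ} (hp : 1 ≤ p) {μ ν : Measure E} [IsProbabilityMeasure μ]
    {g : E → ℝ} {L : ℝ≥0} (hg : LipschitzWith L g)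
    {K : Set E} (hK : IsCompact K) (hμK : μ Kᶜ = 0) (hνK : ν Kᶜ = 0)
    {π : Measure (E × E)} (hπ1 : π.fst = μ) (hπ2 : π.snd = ν) :
    (∫ y, |g y| ^ p ∂μ) ^ (1 / p) ≤ (∫ y, |g y| ^ p ∂ν) ^ (1 / p)
      + (L : ℝ) * (∫ z, dist z.1 z.2 ^ p ∂π) ^ (1 / p) := by
  have hp0 : (0 : ℝ) < p := lt_of_lt_of_le zero_lt_one hp
  have hp0' : (0 : ℝ) ≤ p := hp0.le
  have hpne : p ≠ 0 := hp0.ne'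
  -- π is a probability measure
  haveI hπprob : IsProbabilityMeasure π := by
    constructor
    have : π.fst Set.univ = π Set.univ := by
      rw [Measure.fst_apply MeasurableSet.univ, Set.preimage_univ]
    rw [← this, hπ1, measure_univ]
  -- exponent in ℝ≥0∞
  set q : ℝ≥0∞ := ENNReal.ofReal p with hq
  have hq0 : q ≠ 0 := by simp [hq, ENNReal.ofReal_pos, hp0, ne_of_gt]
  have hqtop : q ≠ ∞ := ENNReal.ofReal_ne_top
  have hqR : q.toReal = p := ENNReal.toReal_ofReal hp0'
  have hq1 : (1 : ℝ≥0∞) ≤ q := by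
    rw [hq, ← ENNReal.ofReal_one]
    exact ENNReal.ofReal_le_ofReal hp
  -- bounds on K
  obtain ⟨C, hC⟩ := hK.exists_bound_of_continuousOn hg.continuous.continuousOn
  obtain ⟨Cd, hCd⟩ := Metric.isBounded_iff.mp hK.isBounded
  -- a.e. statements
  have h1 : ∀ᵐ z ∂π, z.1 ∈ K := by
    have hmeas : MeasurableSet Kᶜ := hK.isClosed.measurableSet.compl
    have : π (Prod.fst ⁻¹' Kᶜ) = 0 := by
      rw [← Measure.fst_apply hmeas, hπ1, hμK]
    refine (ae_iff).mpr ?_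
    simpa [Set.preimage] using this
  have h2 : ∀ᵐ z ∂π, z.2 ∈ K := by
    have hmeas : MeasurableSet Kᶜ := hK.isClosed.measurableSet.compl
    have : π (Prod.snd ⁻¹' Kᶜ) = 0 := by
      rw [← Measure.snd_apply hmeas, hπ2, hνK]
    refine (ae_iff).mpr ?_
    simpa [Set.preimage] using this
  -- Memℒp facts
  have hc1 : Continuous fun z : E × E => g z.1 := hg.continuous.comp continuous_fst
  have hc2 : Continuous fun z : E × E => g z.2 := hg.continuous.comp continuous_snd
  have hA1 : MemLp (fun z : E × E => g z.1) q π :=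
    MemLp.of_bound hc1.aestronglyMeasurable C (h1.mono fun z hz => hC _ hz)
  have hA2 : MemLp (fun z : E × E => g z.2) q π :=
    MemLp.of_bound hc2.aestronglyMeasurable C (h2.mono fun z hz => hC _ hz)
  have hBd : MemLp (fun z : E × E => g z.1 - g z.2) q π := hA1.sub hA2
  -- Minkowski
  have heq : (fun z : E × E => g z.2) + (fun z : E × E => g z.1 - g z.2)
      = fun z : E × E => g z.1 := by funext z; simp
  have htri : eLpNorm (fun z : E × E => g z.1) q π
      ≤ eLpNorm (fun z : E × E => g z.2) q π
        + eLpNorm (fun z : E × E => g z.1 - g z.2) q π := by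
    have := eLpNorm_add_le hA2.1 hBd.1 hq1
    rwa [heq] at this
  -- rewrite eLpNorms as real integrals
  have habs : Continuous fun y => |g y| ^ p :=
    (hg.continuous.abs).rpow_const fun y => Or.inr hp0'
  have hm1 : ∫ y, |g y| ^ p ∂μ = ∫ z, |g z.1| ^ p ∂π := by
    rw [← hπ1, Measure.fst, integral_map measurable_fst.aemeasurable habs.aestronglyMeasurable]
  have hm2 : ∫ y, |g y| ^ p ∂ν = ∫ z, |g z.2| ^ p ∂π := by
    rw [← hπ2, Measure.snd, integral_map measurable_snd.aemeasurable habs.aestronglyMeasurable]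
  have hInn : (0:ℝ) ≤ ∫ y, |g y| ^ p ∂μ :=
    integral_nonneg fun y => Real.rpow_nonneg (abs_nonneg _) _
  have hBnn : (0:ℝ) ≤ ∫ y, |g y| ^ p ∂ν :=
    integral_nonneg fun y => Real.rpow_nonneg (abs_nonneg _) _
  have hDnn : (0:ℝ) ≤ ∫ z, |g z.1 - g z.2| ^ p ∂π :=
    integral_nonneg fun z => Real.rpow_nonneg (abs_nonneg _) _
  have hcnn : (0:ℝ) ≤ ∫ z, dist z.1 z.2 ^ p ∂π :=
    integral_nonneg fun z => Real.rpow_nonneg dist_nonneg _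
  have e1 : eLpNorm (fun z : E × E => g z.1) q π
      = ENNReal.ofReal ((∫ y, |g y| ^ p ∂μ) ^ (1 / p)) := by
    rw [hA1.eLpNorm_eq_integral_rpow_norm hq0 hqtop, hqR, hm1, one_div]
    simp only [Real.norm_eq_abs]
  have e2 : eLpNorm (fun z : E × E => g z.2) q π
      = ENNReal.ofReal ((∫ y, |g y| ^ p ∂ν) ^ (1 / p)) := by
    rw [hA2.eLpNorm_eq_integral_rpow_norm hq0 hqtop, hqR, hm2, one_div]
    simp only [Real.norm_eq_abs]
  have e3 : eLpNorm (fun z : E × E => g z.1 - g z.2) q π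
      = ENNReal.ofReal ((∫ z, |g z.1 - g z.2| ^ p ∂π) ^ (1 / p)) := by
    rw [hBd.eLpNorm_eq_integral_rpow_norm hq0 hqtop, hqR, one_div]
    simp only [Real.norm_eq_abs]
  have hIB : (∫ y, |g y| ^ p ∂μ) ^ (1 / p)
      ≤ (∫ y, |g y| ^ p ∂ν) ^ (1 / p) + (∫ z, |g z.1 - g z.2| ^ p ∂π) ^ (1 / p) := by
    rw [e1, e2, e3, ← ENNReal.ofReal_add (Real.rpow_nonneg hBnn _)
      (Real.rpow_nonneg hDnn _)] at htri
    exact (ENNReal.ofReal_le_ofReal_iff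
      (add_nonneg (Real.rpow_nonneg hBnn _) (Real.rpow_nonneg hDnn _))).mp htri
  -- bound the difference term by L * cost
  have hCd' : ∀ᵐ z ∂π, dist z.1 z.2 ≤ max Cd 0 := by
    filter_upwards [h1, h2] with z hz1 hz2
    exact le_max_of_le_left (hCd hz1 hz2)
  have hintD : Integrable (fun z : E × E => |g z.1 - g z.2| ^ p) π := by
    refine memLp_one_iff_integrable.mp (MemLp.of_bound
      (((hc1.sub hc2).abs.rpow_const fun z => Or.inr hp0').aestronglyMeasurable)
      ((max (2 * C) 0) ^ p) ?_)
    filter_upwards [h1, h2] with z hz1 hz2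
    rw [Real.norm_eq_abs, abs_of_nonneg (Real.rpow_nonneg (abs_nonneg _) _)]
    refine Real.rpow_le_rpow (abs_nonneg _) ?_ hp0'
    refine le_max_of_le_left ?_
    calc |g z.1 - g z.2| ≤ |g z.1| + |g z.2| := abs_sub _ _
      _ ≤ C + C := add_le_add (hC _ hz1) (hC _ hz2)
      _ = 2 * C := by ring
  have hintc : Integrable (fun z : E × E => (L : ℝ) ^ p * dist z.1 z.2 ^ p) π := by
    refine memLp_one_iff_integrable.mp (MemLp.of_bound
      ((continuous_const.mul (continuous_dist.rpow_const fun z =>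
        Or.inr hp0')).aestronglyMeasurable) ((L : ℝ) ^ p * (max Cd 0) ^ p) ?_)
    filter_upwards [hCd'] with z hz
    rw [Real.norm_eq_abs, abs_of_nonneg (mul_nonneg (Real.rpow_nonneg L.coe_nonneg _)
      (Real.rpow_nonneg dist_nonneg _))]
    exact mul_le_mul_of_nonneg_left (Real.rpow_le_rpow dist_nonneg hz hp0')
      (Real.rpow_nonneg L.coe_nonneg _)
  have hmono : ∫ z, |g z.1 - g z.2| ^ p ∂π
      ≤ ∫ z, (L : ℝ) ^ p * dist z.1 z.2 ^ p ∂π := by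
    refine integral_mono hintD hintc fun z => ?_
    have hd : |g z.1 - g z.2| ≤ (L : ℝ) * dist z.1 z.2 := by
      have := hg.dist_le_mul z.1 z.2
      rwa [Real.dist_eq] at this
    calc |g z.1 - g z.2| ^ p ≤ ((L : ℝ) * dist z.1 z.2) ^ p :=
          Real.rpow_le_rpow (abs_nonneg _) hd hp0'
      _ = (L : ℝ) ^ p * dist z.1 z.2 ^ p := Real.mul_rpow L.coe_nonneg dist_nonneg
  have hconst : ∫ z, (L : ℝ) ^ p * dist z.1 z.2 ^ p ∂π
      = (L : ℝ) ^ p * ∫ z, dist z.1 z.2 ^ p ∂π := integral_const_mul _ _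
  have hfin : (∫ z, |g z.1 - g z.2| ^ p ∂π) ^ (1 / p)
      ≤ (L : ℝ) * (∫ z, dist z.1 z.2 ^ p ∂π) ^ (1 / p) := by
    calc (∫ z, |g z.1 - g z.2| ^ p ∂π) ^ (1 / p)
        ≤ ((L : ℝ) ^ p * ∫ z, dist z.1 z.2 ^ p ∂π) ^ (1 / p) := by
          refine Real.rpow_le_rpow hDnn ?_ (by positivity)
          rw [← hconst]; exact hmono
      _ = (L : ℝ) * (∫ z, dist z.1 z.2 ^ p ∂π) ^ (1 / p) := by
          rw [Real.mul_rpow (Real.rpow_nonneg L.coe_nonneg _) hcnn,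
            ← Real.rpow_mul L.coe_nonneg, mul_one_div, div_self hpne, Real.rpow_one]
  exact hIB.trans (add_le_add_right hfin _)

/-- Pathwise generalisation-error estimate: for every sample point `ω` and every `φ ∈ V`,
`‖u_N(ω) − f‖_{L^p(μ)} ≤ ((1/N)Σᵢ|φ(Xᵢ(ω)) − f(Xᵢ(ω))|^p)^{1/p} + L_{X(ω)} · W_p(μ, μ_{N,X(ω)})`. -/
theorem pathwise_generalisation_estimate {d : ℕ} (p : ℝ) (hp : 1 ≤ p)
    {Ω : Type*} [MeasurableSpace Ω] (P : Measure Ω) [IsProbabilityMeasure P]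
    (D : Set (EuclideanSpace ℝ (Fin d))) (hD : IsCompact D)
    (μ : Measure (EuclideanSpace ℝ (Fin d))) [IsProbabilityMeasure μ] (hμ : μ Dᶜ = 0)
    (X : ℕ → Ω → EuclideanSpace ℝ (Fin d)) (hXm : ∀ i, Measurable (X i))
    (hXlaw : ∀ i, Measure.map (X i) P = μ)
    (hindep : iIndepFun X P)
    (Kf : ℝ≥0) (f : EuclideanSpace ℝ (Fin d) → ℝ) (hf : LipschitzWith Kf f)
    (V : Set (EuclideanSpace ℝ (Fin d) → ℝ))
    (hVLip : ∀ v ∈ V, ∃ K : ℝ≥0, LipschitzWith K v)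
    (N : ℕ) (hN : 0 < N)
    (u : Ω → EuclideanSpace ℝ (Fin d) → ℝ) (huV : ∀ ω, u ω ∈ V)
    (hmin : ∀ ω, ∀ v ∈ V,
      (1 / (N : ℝ)) * ∑ i : Fin N, |u ω (X i ω) - f (X i ω)| ^ p
        ≤ (1 / (N : ℝ)) * ∑ i : Fin N, |v (X i ω) - f (X i ω)| ^ p)
    (LX : Ω → ℝ≥0) (hLX : ∀ ω, LipschitzWith (LX ω) (fun x => u ω x - f x)) :
    ∀ ω, ∀ φ ∈ V,
      (∫ x, |u ω x - f x| ^ p ∂μ) ^ (1 / p)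
        ≤ ((1 / (N : ℝ)) * ∑ i : Fin N, |φ (X i ω) - f (X i ω)| ^ p) ^ (1 / p)
          + LX ω * Wp p μ (empiricalMeasure N (fun i => X i ω)) := by
  intro ω φ hφ
  have hp0 : (0 : ℝ) < p := lt_of_lt_of_le zero_lt_one hp
  have hp0' : (0 : ℝ) ≤ p := hp0.le
  set g : EuclideanSpace ℝ (Fin d) → ℝ := fun x => u ω x - f x with hgdef
  have hg : LipschitzWith (LX ω) g := hLX ω
  set x : Fin N → EuclideanSpace ℝ (Fin d) := fun i => X i ω with hxdef
  set ν : Measure (EuclideanSpace ℝ (Fin d)) := empiricalMeasure N x with hνdef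
  haveI hνprob : IsProbabilityMeasure ν := empirical_isProb hN x
  -- the compact set K
  set K : Set (EuclideanSpace ℝ (Fin d)) := D ∪ Set.range x with hKdef
  have hKc : IsCompact K := hD.union (Set.finite_range x).isCompact
  have hμK : μ Kᶜ = 0 :=
    measure_mono_null (Set.compl_subset_compl.mpr Set.subset_union_left) hμ
  have hνK : ν Kᶜ = 0 := by
    refine measure_mono_null (Set.compl_subset_compl.mpr Set.subset_union_right) ?_
    have hd : ∀ i : Fin N, Measure.dirac (x i) (Set.range x)ᶜ = 0 := fun i => by
      rw [Measure.dirac_apply]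
      simp [Set.indicator_of_notMem, Set.mem_range_self]
    simp only [hνdef, empiricalMeasure, Measure.smul_apply, Measure.coe_finset_sum,
      Finset.sum_apply, smul_eq_mul]
    simp [hd]
  -- the transport cost set
  set T : Set ℝ := {c : ℝ | ∃ π ∈ couplings μ ν, c = ∫ z, dist z.1 z.2 ^ p ∂π} with hTdef
  have hTne : T.Nonempty :=
    ⟨∫ z, dist z.1 z.2 ^ p ∂(μ.prod ν), μ.prod ν,
      ⟨Measure.fst_prod, Measure.snd_prod⟩, rfl⟩
  have hT0 : ∀ c ∈ T, 0 ≤ c := by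
    rintro c ⟨π, hπ, rfl⟩
    exact integral_nonneg fun z => Real.rpow_nonneg dist_nonneg _
  have hs0 : 0 ≤ sInf T := Real.sInf_nonneg hT0
  -- empirical integral of |g|^p
  have habs : Continuous fun y => |g y| ^ p :=
    (hg.continuous.abs).rpow_const fun y => Or.inr hp0'
  have hBν : ∫ y, |g y| ^ p ∂ν = (1 / (N : ℝ)) * ∑ i, |g (x i)| ^ p :=
    integral_empiricalMeasure x habs.stronglyMeasurable
  have hBle : ∫ y, |g y| ^ p ∂ν ≤ (1 / (N : ℝ)) * ∑ i, |φ (x i) - f (x i)| ^ p := by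
    rw [hBν]; exact hmin ω φ hφ
  have hBnn : (0:ℝ) ≤ ∫ y, |g y| ^ p ∂ν :=
    integral_nonneg fun y => Real.rpow_nonneg (abs_nonneg _) _
  -- key estimate for each ε > 0
  have key : ∀ ε > (0:ℝ), (∫ y, |g y| ^ p ∂μ) ^ (1 / p)
      ≤ (∫ y, |g y| ^ p ∂ν) ^ (1 / p) + (LX ω : ℝ) * (sInf T + ε) ^ (1 / p) := by
    intro ε hε
    obtain ⟨c, hcT, hclt⟩ := Real.lt_sInf_add_pos hTne hε
    obtain ⟨π, ⟨hπ1, hπ2⟩, rfl⟩ := hcT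
    refine (coupling_bound hp hg hKc hμK hνK hπ1 hπ2).trans
      (add_le_add_right (mul_le_mul_of_nonneg_left ?_ (LX ω).coe_nonneg) _)
    exact Real.rpow_le_rpow (hT0 _ ⟨π, ⟨hπ1, hπ2⟩, rfl⟩) hclt.le (by positivity)
  -- take the limit ε → 0⁺
  have hlim : Filter.Tendsto
      (fun ε : ℝ => (∫ y, |g y| ^ p ∂ν) ^ (1 / p) + (LX ω : ℝ) * (sInf T + ε) ^ (1 / p))
      (nhdsWithin 0 (Set.Ioi 0))
      (nhds ((∫ y, |g y| ^ p ∂ν) ^ (1 / p) + (LX ω : ℝ) * (sInf T) ^ (1 / p))) := by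
    have h1 : Filter.Tendsto (fun ε : ℝ => sInf T + ε) (nhdsWithin 0 (Set.Ioi 0))
        (nhds (sInf T)) := by
      have h1' : Filter.Tendsto (fun ε : ℝ => sInf T + ε) (nhds (0:ℝ))
          (nhds (sInf T + 0)) := (continuous_const.add continuous_id).tendsto 0
      rw [add_zero] at h1'
      exact h1'.mono_left nhdsWithin_le_nhds
    have h2 : ContinuousAt (fun t : ℝ => t ^ (1 / p)) (sInf T) :=
      Real.continuousAt_rpow_const _ _ (Or.inr (by positivity))
    exact Filter.Tendsto.const_add _ (Filter.Tendsto.const_mul _ (h2.tendsto.comp h1))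
  have hmain : (∫ y, |g y| ^ p ∂μ) ^ (1 / p)
      ≤ (∫ y, |g y| ^ p ∂ν) ^ (1 / p) + (LX ω : ℝ) * (sInf T) ^ (1 / p) := by
    refine ge_of_tendsto hlim ?_
    filter_upwards [self_mem_nhdsWithin] with ε hε
    exact key ε hε
  have hWp : Wp p μ ν = (sInf T) ^ (1 / p) := rfl
  calc (∫ y, |g y| ^ p ∂μ) ^ (1 / p)
      ≤ (∫ y, |g y| ^ p ∂ν) ^ (1 / p) + (LX ω : ℝ) * (sInf T) ^ (1 / p) := hmain
    _ ≤ ((1 / (N : ℝ)) * ∑ i, |φ (x i) - f (x i)| ^ p) ^ (1 / p)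
        + (LX ω : ℝ) * (sInf T) ^ (1 / p) := by
        refine add_le_add_left (Real.rpow_le_rpow hBnn hBle (by positivity)) _
    _ = ((1 / (N : ℝ)) * ∑ i, |φ (x i) - f (x i)| ^ p) ^ (1 / p)
        + (LX ω : ℝ) * Wp p μ ν := by rw [hWp]
end

section
/- Let X₁, X₂, … be i.i.d. with law μ on D, V a countable-or-arbitrary set of measurable functions, f measurable with v − f ∈ L^p(μ) for all v ∈ V, and u_N(ω) minimizers of the empirical loss E_{N,ω} over V. Then almost surely, limsup_{N→∞} E_{N,ω}(u_N(ω)) ≤ inf_{φ ∈ V} ‖φ − f‖_{L^p(μ)}^p. -/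
open MeasureTheory ProbabilityTheory Filter

/-- The limsup inequality: almost surely, the empirical losses of the minimizers are
asymptotically bounded by `inf_{φ ∈ V} ‖φ − f‖_{L^p(μ)}^p`. -/
theorem limsup_empirical_loss_le {d : ℕ} (p : ℝ) (hp : 1 ≤ p)
    {Ω : Type*} [MeasurableSpace Ω] (P : Measure Ω) [IsProbabilityMeasure P]
    (μ : Measure (EuclideanSpace ℝ (Fin d))) [IsProbabilityMeasure μ]
    (X : ℕ → Ω → EuclideanSpace ℝ (Fin d)) (hXm : ∀ i, Measurable (X i))
    (hXlaw : ∀ i, Measure.map (X i) P = μ)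
    (hindep : iIndepFun X P)
    (V : Set (EuclideanSpace ℝ (Fin d) → ℝ)) (hVne : V.Nonempty)
    (hVm : ∀ v ∈ V, Measurable v)
    (f : EuclideanSpace ℝ (Fin d) → ℝ) (hf : Measurable f)
    (hVLp : ∀ v ∈ V, Integrable (fun x => |v x - f x| ^ p) μ)
    (u : ℕ → Ω → EuclideanSpace ℝ (Fin d) → ℝ) (huV : ∀ (N : ℕ) ω, u N ω ∈ V)
    (hmin : ∀ (N : ℕ) ω, ∀ v ∈ V,
      (1 / (N : ℝ)) * ∑ i ∈ Finset.range N, |u N ω (X i ω) - f (X i ω)| ^ p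
        ≤ (1 / (N : ℝ)) * ∑ i ∈ Finset.range N, |v (X i ω) - f (X i ω)| ^ p) :
    ∀ᵐ ω ∂P,
      limsup (fun N : ℕ => (1 / (N : ℝ)) * ∑ i ∈ Finset.range N,
          |u N ω (X i ω) - f (X i ω)| ^ p) atTop
        ≤ ⨅ φ : V, ∫ x, |(φ : EuclideanSpace ℝ (Fin d) → ℝ) x - f x| ^ p ∂μ := by
  -- Notation for the empirical loss of the minimizers
  set L : Ω → ℕ → ℝ := fun ω N => (1 / (N : ℝ)) * ∑ i ∈ Finset.range N,
      |u N ω (X i ω) - f (X i ω)| ^ p with hL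
  have hLnonneg : ∀ ω N, 0 ≤ L ω N := by
    intro ω N
    apply mul_nonneg (by positivity)
    exact Finset.sum_nonneg fun i _ => Real.rpow_nonneg (abs_nonneg _) p
  -- Key step: for each fixed v ∈ V, a.s. limsup L ≤ ∫ |v - f|^p dμ
  have key : ∀ v ∈ V, ∀ᵐ ω ∂P,
      limsup (fun N : ℕ => L ω N) atTop ≤ ∫ x, |v x - f x| ^ p ∂μ := by
    intro v hv
    set g : EuclideanSpace ℝ (Fin d) → ℝ := fun x => |v x - f x| ^ p with hg
    have hgm : Measurable g := by
      have h1 := hVm v hv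
      fun_prop
    have hident : ∀ i, IdentDistrib (g ∘ X i) (g ∘ X 0) P P := by
      intro i
      have h0 : IdentDistrib (X i) (X 0) P P :=
        ⟨(hXm i).aemeasurable, (hXm 0).aemeasurable, by rw [hXlaw i, hXlaw 0]⟩
      exact h0.comp hgm
    have hindep' : Pairwise (Function.onFun (IndepFun · · P) (fun i => g ∘ X i)) := by
      intro i j hij
      exact (hindep.indepFun hij).comp hgm hgm
    have hint : Integrable (g ∘ X 0) P := by
      have := hVLp v hv
      rw [← hXlaw 0] at this
      exact (integrable_map_measure hgm.aestronglyMeasurable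
        (hXm 0).aemeasurable).mp this
    have hslln := strong_law_ae_real (fun i => g ∘ X i) hint hindep' hident
    have hEint : ∫ ω, (g ∘ X 0) ω ∂P = ∫ x, g x ∂μ := by
      rw [← hXlaw 0, integral_map (hXm 0).aemeasurable hgm.aestronglyMeasurable]
      rfl
    filter_upwards [hslln] with ω hω
    rw [hEint] at hω
    have hle : ∀ N : ℕ, L ω N ≤ (∑ i ∈ Finset.range N, (g ∘ X i) ω) / N := by
      intro N
      have := hmin N ω v hv
      calc L ω N ≤ (1 / (N : ℝ)) * ∑ i ∈ Finset.range N, |v (X i ω) - f (X i ω)| ^ p := this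
        _ = (∑ i ∈ Finset.range N, (g ∘ X i) ω) / N := by
            rw [one_div, inv_mul_eq_div]; rfl
    have hlimsup_eq : limsup (fun N : ℕ => (∑ i ∈ Finset.range N, (g ∘ X i) ω) / N) atTop
        = ∫ x, g x ∂μ := hω.limsup_eq
    calc limsup (fun N : ℕ => L ω N) atTop
        ≤ limsup (fun N : ℕ => (∑ i ∈ Finset.range N, (g ∘ X i) ω) / N) atTop := by
          exact limsup_le_limsup (Eventually.of_forall hle)
            (isCoboundedUnder_le_of_le atTop fun N => hLnonneg ω N)
            hω.isBoundedUnder_le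
      _ = ∫ x, g x ∂μ := hlimsup_eq
  -- Set up the infimum
  set c : ℝ := ⨅ φ : V, ∫ x, |(φ : EuclideanSpace ℝ (Fin d) → ℝ) x - f x| ^ p ∂μ with hc
  haveI : Nonempty V := hVne.to_subtype
  -- choose a minimizing sequence
  have hseq : ∀ n : ℕ, ∃ φ : V, ∫ x, |(φ : EuclideanSpace ℝ (Fin d) → ℝ) x - f x| ^ p ∂μ
      < c + 1 / (n + 1) := by
    intro n
    apply exists_lt_of_ciInf_lt
    rw [← hc]
    have : (0 : ℝ) < 1 / (n + 1) := by positivity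
    linarith
  choose φ hφ using hseq
  have hall : ∀ᵐ ω ∂P, ∀ n : ℕ,
      limsup (fun N : ℕ => L ω N) atTop
        ≤ ∫ x, |(φ n : EuclideanSpace ℝ (Fin d) → ℝ) x - f x| ^ p ∂μ := by
    rw [ae_all_iff]
    intro n
    exact key (φ n) (φ n).2
  filter_upwards [hall] with ω hω
  apply le_of_forall_pos_le_add
  intro ε hε
  obtain ⟨n, hn⟩ := exists_nat_one_div_lt hε
  calc limsup (fun N : ℕ => L ω N) atTop
      ≤ ∫ x, |(φ n : EuclideanSpace ℝ (Fin d) → ℝ) x - f x| ^ p ∂μ := hω n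
    _ ≤ c + 1 / (n + 1) := (hφ n).le
    _ ≤ c + ε := by linarith
end
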